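/- Let e, f be distinct elements of [n] and 2 ≤ r ≤ n-2. The number of stable sets in J(n,r) invariant under the transposition (e f) equals the product of the number of stable sets in the subgraph of J(n,r) induced by r-sets avoiding both e and f, and the number of stable sets in the subgraph induced by r-sets containing both e and f. -/

import Mathlib

open scoped symmDiff

/-- The vertex type of the Johnson graph `J(n,r)`: the `r`-element subsets of `[n]`. -/
abbrev JVert (n r : ℕ) := {X : Finset (Fin n) // X.card = r}

/-- The Johnson graph `J(n,r)`: vertices are the `r`-subsets of `[n]`,
with `X` and `Y` adjacent iff `|X △ Y| = 2`. -/
def JohnsonGraph (n r : ℕ) : SimpleGraph (JVert n r) where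
  Adj X Y := ((X : Finset (Fin n)) ∆ (Y : Finset (Fin n))).card = 2
  symm := by constructor; intro X Y h; rwa [symmDiff_comm]
  loopless := by constructor; intro X h; simp [symmDiff_self] at h

/-- A stable (independent) set of vertices in a graph. -/
def IsStable {V : Type*} (G : SimpleGraph V) (S : Set V) : Prop :=
  ∀ X ∈ S, ∀ Y ∈ S, ¬ G.Adj X Y

/-- The pointwise action of a permutation of `[n]` on the vertices of `J(n,r)`. -/
def permVert {n r : ℕ} (π : Equiv.Perm (Fin n)) (X : JVert n r) : JVert n r :=
  ⟨(X : Finset (Fin n)).image π, by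
    rw [Finset.card_image_of_injective _ π.injective, X.2]⟩

lemma mem_swap_image {n : ℕ} {e f : Fin n} {X : Finset (Fin n)} (a : Fin n) :
    a ∈ X.image (Equiv.swap e f) ↔ Equiv.swap e f a ∈ X := by
  constructor
  · intro h
    obtain ⟨b, hb, rfl⟩ := Finset.mem_image.mp h
    rwa [Equiv.swap_apply_self]
  · intro h
    exact Finset.mem_image.mpr ⟨_, h, Equiv.swap_apply_self e f a⟩

lemma swap_image_avoid {n : ℕ} {e f : Fin n} {X : Finset (Fin n)}
    (he : e ∉ X) (hf : f ∉ X) : X.image (Equiv.swap e f) = X := by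
  ext a
  rw [mem_swap_image]
  by_cases hae : a = e
  · subst hae; rw [Equiv.swap_apply_left]; simp [he, hf]
  by_cases haf : a = f
  · subst haf; rw [Equiv.swap_apply_right]; simp [he, hf]
  · rw [Equiv.swap_apply_of_ne_of_ne hae haf]

lemma swap_image_contain {n : ℕ} {e f : Fin n} {X : Finset (Fin n)}
    (he : e ∈ X) (hf : f ∈ X) : X.image (Equiv.swap e f) = X := by
  ext a
  rw [mem_swap_image]
  by_cases hae : a = e
  · subst hae; rw [Equiv.swap_apply_left]; simp [he, hf]
  by_cases haf : a = f
  · subst haf; rw [Equiv.swap_apply_right]; simp [he, hf]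
  · rw [Equiv.swap_apply_of_ne_of_ne hae haf]

lemma swap_image_symmDiff {n : ℕ} {e f : Fin n} (hef : e ≠ f) {X : Finset (Fin n)}
    (hfX : f ∈ X) (heX : e ∉ X) : (X.image (Equiv.swap e f)) ∆ X = {e, f} := by
  ext a
  rw [Finset.mem_symmDiff, mem_swap_image]
  by_cases hae : a = e
  · subst hae; rw [Equiv.swap_apply_left]; simp [hfX, heX]
  by_cases haf : a = f
  · subst haf; rw [Equiv.swap_apply_right]; simp [hfX, heX, hef]
  · rw [Equiv.swap_apply_of_ne_of_ne hae haf]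
    simp [hae, haf]

/-- Cross-type vertices are never adjacent. -/
lemma cross_not_adj {n : ℕ} {e f : Fin n} (hef : e ≠ f) {X Y : Finset (Fin n)}
    (hcard : X.card = Y.card) (heX : e ∉ X) (hfX : f ∉ X) (heY : e ∈ Y) (hfY : f ∈ Y) :
    (X ∆ Y).card ≠ 2 := by
  intro h
  have hdis : Disjoint (X \ Y) (Y \ X) := disjoint_sdiff_sdiff
  have hsub : ({e, f} : Finset (Fin n)) ⊆ Y \ X := by
    intro a ha
    rcases Finset.mem_insert.mp ha with rfl | ha
    · exact Finset.mem_sdiff.mpr ⟨heY, heX⟩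
    · rw [Finset.mem_singleton] at ha; subst ha
      exact Finset.mem_sdiff.mpr ⟨hfY, hfX⟩
  have h2le : 2 ≤ (Y \ X).card := by
    have := Finset.card_le_card hsub
    rwa [Finset.card_insert_of_notMem (by simp [hef]), Finset.card_singleton] at this
  have hXY : (X \ Y).card + (X ∩ Y).card = X.card := Finset.card_sdiff_add_card_inter X Y
  have hYX : (Y \ X).card + (Y ∩ X).card = Y.card := Finset.card_sdiff_add_card_inter Y X
  have hint : (X ∩ Y).card = (Y ∩ X).card := by rw [Finset.inter_comm]
  have hsd : (X ∆ Y).card = (X \ Y).card + (Y \ X).card := by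
    rw [symmDiff_def]
    exact Finset.card_union_of_disjoint hdis
  omega

lemma ncard_prod' {α β : Type*} (s : Set α) (t : Set β) :
    (s ×ˢ t).ncard = s.ncard * t.ncard := by
  rw [← Nat.card_coe_set_eq, ← Nat.card_coe_set_eq, ← Nat.card_coe_set_eq,
    ← Nat.card_prod]
  exact Nat.card_congr (Equiv.Set.prod s t)

/-- For a transposition `(e f)` and `2 ≤ r ≤ n-2`, the number of `(e f)`-invariant stable
sets in `J(n,r)` equals the number of stable sets among the vertices avoiding both `e` and
`f` times the number of stable sets among the vertices containing both `e` and `f`. -/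
theorem stmt_7 (n r : ℕ) (e f : Fin n) (hef : e ≠ f) (h2 : 2 ≤ r) (hrn : r ≤ n - 2) :
    {I : Finset (JVert n r) | IsStable (JohnsonGraph n r) ↑I ∧
        ∀ X ∈ I, permVert (Equiv.swap e f) X ∈ I}.ncard =
      {I : Finset (JVert n r) | IsStable (JohnsonGraph n r) ↑I ∧
          ∀ X ∈ I, e ∉ (X : Finset (Fin n)) ∧ f ∉ (X : Finset (Fin n))}.ncard *
      {I : Finset (JVert n r) | IsStable (JohnsonGraph n r) ↑I ∧
          ∀ X ∈ I, e ∈ (X : Finset (Fin n)) ∧ f ∈ (X : Finset (Fin n))}.ncard := by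
  classical
  set S1 : Set (Finset (JVert n r)) := {I | IsStable (JohnsonGraph n r) ↑I ∧
      ∀ X ∈ I, e ∉ (X : Finset (Fin n)) ∧ f ∉ (X : Finset (Fin n))} with hS1
  set S2 : Set (Finset (JVert n r)) := {I | IsStable (JohnsonGraph n r) ↑I ∧
      ∀ X ∈ I, e ∈ (X : Finset (Fin n)) ∧ f ∈ (X : Finset (Fin n))} with hS2
  set SL : Set (Finset (JVert n r)) := {I | IsStable (JohnsonGraph n r) ↑I ∧
      ∀ X ∈ I, permVert (Equiv.swap e f) X ∈ I} with hSL
  have hkey : SL = (fun p : Finset (JVert n r) × Finset (JVert n r) => p.1 ∪ p.2) ''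
      (S1 ×ˢ S2) := by
    apply Set.Subset.antisymm
    · rintro I ⟨hst, hinv⟩
      refine ⟨(I.filter (fun X => e ∉ (X : Finset (Fin n))),
        I.filter (fun X => e ∈ (X : Finset (Fin n)))), ⟨?_, ?_⟩, ?_⟩
      · constructor
        · intro X hX Y hY
          exact hst X (Finset.mem_coe.mpr (Finset.mem_of_mem_filter _
            (Finset.mem_coe.mp hX))) Y (Finset.mem_coe.mpr (Finset.mem_of_mem_filter _
            (Finset.mem_coe.mp hY)))
        · intro X hX
          obtain ⟨hXI, heX⟩ := Finset.mem_filter.mp hX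
          refine ⟨heX, ?_⟩
          intro hfX
          have hadj : (JohnsonGraph n r).Adj (permVert (Equiv.swap e f) X) X := by
            show ((permVert (Equiv.swap e f) X : Finset (Fin n)) ∆
              (X : Finset (Fin n))).card = 2
            rw [show (permVert (Equiv.swap e f) X : Finset (Fin n)) =
              (X : Finset (Fin n)).image (Equiv.swap e f) from rfl,
              swap_image_symmDiff hef hfX heX]
            rw [Finset.card_insert_of_notMem (by simp [hef]), Finset.card_singleton]
          exact hst _ (Finset.mem_coe.mpr (hinv X hXI)) X (Finset.mem_coe.mpr hXI) hadj
      · constructor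
        · intro X hX Y hY
          exact hst X (Finset.mem_coe.mpr (Finset.mem_of_mem_filter _
            (Finset.mem_coe.mp hX))) Y (Finset.mem_coe.mpr (Finset.mem_of_mem_filter _
            (Finset.mem_coe.mp hY)))
        · intro X hX
          obtain ⟨hXI, heX⟩ := Finset.mem_filter.mp hX
          refine ⟨heX, ?_⟩
          by_contra hfX
          have hadj : (JohnsonGraph n r).Adj (permVert (Equiv.swap e f) X) X := by
            show ((permVert (Equiv.swap e f) X : Finset (Fin n)) ∆
              (X : Finset (Fin n))).card = 2
            rw [show (permVert (Equiv.swap e f) X : Finset (Fin n)) =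
              (X : Finset (Fin n)).image (Equiv.swap e f) from rfl,
              Equiv.swap_comm, swap_image_symmDiff hef.symm heX hfX]
            rw [Finset.card_insert_of_notMem (by simp [hef.symm]), Finset.card_singleton]
          exact hst _ (Finset.mem_coe.mpr (hinv X hXI)) X (Finset.mem_coe.mpr hXI) hadj
      · simp only
        ext X
        simp only [Finset.mem_union, Finset.mem_filter]
        tauto
    · rintro I ⟨⟨A, B⟩, ⟨⟨hAst, hAm⟩, ⟨hBst, hBm⟩⟩, rfl⟩
      simp only
      constructor
      · intro X hX Y hY hadj
        have hX' := Finset.mem_union.mp (Finset.mem_coe.mp hX)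
        have hY' := Finset.mem_union.mp (Finset.mem_coe.mp hY)
        have hadj' : ((X : Finset (Fin n)) ∆ (Y : Finset (Fin n))).card = 2 := hadj
        rcases hX' with hXA | hXB
        · rcases hY' with hYA | hYB
          · exact hAst X (Finset.mem_coe.mpr hXA) Y (Finset.mem_coe.mpr hYA) hadj
          · obtain ⟨heX, hfX⟩ := hAm X hXA
            obtain ⟨heY, hfY⟩ := hBm Y hYB
            exact cross_not_adj hef (by rw [X.2, Y.2]) heX hfX heY hfY hadj'
        · rcases hY' with hYA | hYB
          · obtain ⟨heY, hfY⟩ := hAm Y hYA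
            obtain ⟨heX, hfX⟩ := hBm X hXB
            have : ((Y : Finset (Fin n)) ∆ (X : Finset (Fin n))).card = 2 := by
              rwa [symmDiff_comm]
            exact cross_not_adj hef (by rw [Y.2, X.2]) heY hfY heX hfX this
          · exact hBst X (Finset.mem_coe.mpr hXB) Y (Finset.mem_coe.mpr hYB) hadj
      · intro X hX
        rcases Finset.mem_union.mp hX with hXA | hXB
        · obtain ⟨heX, hfX⟩ := hAm X hXA
          have : permVert (Equiv.swap e f) X = X :=
            Subtype.ext (swap_image_avoid heX hfX)
          rw [this]; exact hX
        · obtain ⟨heX, hfX⟩ := hBm X hXB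
          have : permVert (Equiv.swap e f) X = X :=
            Subtype.ext (swap_image_contain heX hfX)
          rw [this]; exact hX
  have hinj : Set.InjOn (fun p : Finset (JVert n r) × Finset (JVert n r) => p.1 ∪ p.2)
      (S1 ×ˢ S2) := by
    rintro ⟨A, B⟩ ⟨hA, hB⟩ ⟨A', B'⟩ ⟨hA', hB'⟩ h
    simp only at h
    have hAA : A = A' := by
      ext X
      constructor
      · intro hX
        have : X ∈ A' ∪ B' := by rw [← h]; exact Finset.mem_union_left _ hX
        rcases Finset.mem_union.mp this with h' | h'
        · exact h'
        · exact absurd (hB'.2 X h').1 (fun he => (hA.2 X hX).1 he)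
      · intro hX
        have : X ∈ A ∪ B := by rw [h]; exact Finset.mem_union_left _ hX
        rcases Finset.mem_union.mp this with h' | h'
        · exact h'
        · exact absurd (hB.2 X h').1 (fun he => (hA'.2 X hX).1 he)
    have hBB : B = B' := by
      ext X
      constructor
      · intro hX
        have : X ∈ A' ∪ B' := by rw [← h]; exact Finset.mem_union_right _ hX
        rcases Finset.mem_union.mp this with h' | h'
        · exact absurd (hB.2 X hX).1 (fun he => (hA'.2 X h').1 he)
        · exact h'
      · intro hX
        have : X ∈ A ∪ B := by rw [h]; exact Finset.mem_union_right _ hX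
        rcases Finset.mem_union.mp this with h' | h'
        · exact absurd (hB'.2 X hX).1 (fun he => (hA.2 X h').1 he)
        · exact h'
    simp [hAA, hBB]
  rw [hkey, Set.ncard_image_of_injOn hinj, ncard_prod']
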